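/- Let H be an infinite-dimensional separable real Hilbert space and A : H → H a bounded linear operator. Then the following are equivalent: (i) for every frame (f_n)_{n∈ℕ} in H there exist constants 0 < c' ≤ C' such that for all (u, v) ∈ H × H, c'·(‖u‖² + ‖v‖²) ≤ ∑_{n∈ℕ} [(⟨u, f_n⟩ + ⟨v, A f_n⟩)² + (⟨v, f_n⟩ − ⟨u, A f_n⟩)²] ≤ C'·(‖u‖² + ‖v‖²); (ii) there exists a frame (f_n)_{n∈ℕ} in H admitting such constants c', C'; (iii) the bounded linear map H × H → H × H, (x, y) ↦ (x − A y, A x + y), is surjective. -/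

import Mathlib

/-- A family `f : ℕ → H` in a real Hilbert space `H` is a frame if there exist
constants `0 < c ≤ C < ∞` such that `c‖x‖² ≤ ∑' n, ⟨x, f n⟩² ≤ C‖x‖²` for all `x`. -/
def IsFrame {H : Type*} [NormedAddCommGroup H] [InnerProductSpace ℝ H]
    (f : ℕ → H) : Prop :=
  ∃ c C : ℝ, 0 < c ∧ c ≤ C ∧ ∀ x : H,
    c * ‖x‖ ^ 2 ≤ ∑' n, (inner ℝ x (f n) : ℝ) ^ 2 ∧
      ∑' n, (inner ℝ x (f n) : ℝ) ^ 2 ≤ C * ‖x‖ ^ 2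

/-- The rebricked family `(f n + i A (f n))` is a frame in `H + iH`, expressed via
the identification of `H + iH` with `H × H`. -/
def RebrickedIsFrame {H : Type*} [NormedAddCommGroup H] [InnerProductSpace ℝ H]
    (A : H →L[ℝ] H) (f : ℕ → H) : Prop :=
  ∃ c C : ℝ, 0 < c ∧ c ≤ C ∧ ∀ u v : H,
    c * (‖u‖ ^ 2 + ‖v‖ ^ 2) ≤
        ∑' n, (((inner ℝ u (f n) : ℝ) + (inner ℝ v (A (f n)) : ℝ)) ^ 2 +
          ((inner ℝ v (f n) : ℝ) - (inner ℝ u (A (f n)) : ℝ)) ^ 2) ∧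
      ∑' n, (((inner ℝ u (f n) : ℝ) + (inner ℝ v (A (f n)) : ℝ)) ^ 2 +
          ((inner ℝ v (f n) : ℝ) - (inner ℝ u (A (f n)) : ℝ)) ^ 2) ≤
        C * (‖u‖ ^ 2 + ‖v‖ ^ 2)

set_option linter.unusedSectionVars false

open scoped RealInnerProductSpace
open ContinuousLinearMap Function

noncomputable section FrameAux

variable {H : Type*} [NormedAddCommGroup H] [InnerProductSpace ℝ H] [CompleteSpace H]

/-- The map `(x, y) ↦ (x - A y, A x + y)` as a continuous linear map. -/
def Lmap (A : H →L[ℝ] H) : (H × H) →L[ℝ] (H × H) :=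
  ((fst ℝ H H) - A.comp (snd ℝ H H)).prod ((A.comp (fst ℝ H H)) + snd ℝ H H)

@[simp] lemma Lmap_apply (A : H →L[ℝ] H) (p : H × H) :
    Lmap A p = (p.1 - A p.2, A p.1 + p.2) := rfl

/-- The "adjoint" map `(u, v) ↦ (u + A* v, v - A* u)`. -/
def Lstar (A : H →L[ℝ] H) : (H × H) →L[ℝ] (H × H) :=
  ((fst ℝ H H) + (adjoint A).comp (snd ℝ H H)).prod
    ((snd ℝ H H) - (adjoint A).comp (fst ℝ H H))

@[simp] lemma Lstar_apply (A : H →L[ℝ] H) (p : H × H) :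
    Lstar A p = (p.1 + adjoint A p.2, p.2 - adjoint A p.1) := rfl

/-- `Lmap` transported to the Hilbert space `WithLp 2 (H × H)`. -/
def Smap (A : H →L[ℝ] H) : WithLp 2 (H × H) →L[ℝ] WithLp 2 (H × H) :=
  ((WithLp.prodContinuousLinearEquiv 2 ℝ H H).symm.toContinuousLinearMap).comp
    ((Lmap A).comp (WithLp.prodContinuousLinearEquiv 2 ℝ H H).toContinuousLinearMap)

/-- `Lstar` transported to the Hilbert space `WithLp 2 (H × H)`. -/
def Sstar (A : H →L[ℝ] H) : WithLp 2 (H × H) →L[ℝ] WithLp 2 (H × H) :=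
  ((WithLp.prodContinuousLinearEquiv 2 ℝ H H).symm.toContinuousLinearMap).comp
    ((Lstar A).comp (WithLp.prodContinuousLinearEquiv 2 ℝ H H).toContinuousLinearMap)

lemma Smap_fst (A : H →L[ℝ] H) (x : WithLp 2 (H × H)) :
    (Smap A x).fst = x.fst - A x.snd := rfl

lemma Smap_snd (A : H →L[ℝ] H) (x : WithLp 2 (H × H)) :
    (Smap A x).snd = A x.fst + x.snd := rfl

lemma Sstar_fst (A : H →L[ℝ] H) (x : WithLp 2 (H × H)) :
    (Sstar A x).fst = x.fst + adjoint A x.snd := rfl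

lemma Sstar_snd (A : H →L[ℝ] H) (x : WithLp 2 (H × H)) :
    (Sstar A x).snd = x.snd - adjoint A x.fst := rfl

lemma Sstar_eq_adjoint (A : H →L[ℝ] H) : Sstar A = adjoint (Smap A) := by
  rw [eq_adjoint_iff]
  intro x y
  rw [WithLp.prod_inner_apply, WithLp.prod_inner_apply]
  simp only [WithLp.ofLp_fst, WithLp.ofLp_snd]
  rw [Sstar_fst, Sstar_snd,
    Smap_fst, Smap_snd]
  simp only [inner_add_left, inner_sub_left, inner_add_right, inner_sub_right,
    adjoint_inner_left]
  ring

/-- The key quantitative condition: the adjoint of `Id + iA` is bounded below. -/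
def AdjBddBelow (A : H →L[ℝ] H) : Prop :=
  ∃ δ : ℝ, 0 < δ ∧ ∀ u v : H,
    δ * (‖u‖ ^ 2 + ‖v‖ ^ 2) ≤ ‖u + adjoint A v‖ ^ 2 + ‖v - adjoint A u‖ ^ 2

lemma norm_sq_withLp (x : WithLp 2 (H × H)) : ‖x‖ ^ 2 = ‖x.fst‖ ^ 2 + ‖x.snd‖ ^ 2 :=
  WithLp.prod_norm_sq_eq_of_L2 x

lemma surjective_Smap_iff (A : H →L[ℝ] H) :
    Surjective (Smap A) ↔ Surjective (fun p : H × H => (p.1 - A p.2, A p.1 + p.2)) := by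
  have h1 : (fun p : H × H => (p.1 - A p.2, A p.1 + p.2)) = ⇑(Lmap A) := by
    funext p; rfl
  rw [h1]
  constructor
  · intro hs y
    obtain ⟨x, hx⟩ := hs ((WithLp.equiv 2 (H × H)).symm y)
    exact ⟨WithLp.equiv 2 (H × H) x, congrArg (WithLp.equiv 2 (H × H)) hx⟩
  · intro hs y
    obtain ⟨x, hx⟩ := hs (WithLp.equiv 2 (H × H) y)
    exact ⟨(WithLp.equiv 2 (H × H)).symm x,
      congrArg (WithLp.equiv 2 (H × H)).symm hx⟩

lemma adjBddBelow_of_surjective (A : H →L[ℝ] H)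
    (hs : Surjective (fun p : H × H => (p.1 - A p.2, A p.1 + p.2))) : AdjBddBelow A := by
  have hS : Surjective (Smap A) := (surjective_Smap_iff A).2 hs
  obtain ⟨C, Cpos, hC⟩ := (Smap A).exists_preimage_norm_le hS
  have key : ∀ w : WithLp 2 (H × H), ‖w‖ ≤ C * ‖Sstar A w‖ := by
    intro w
    obtain ⟨x, hx, hxn⟩ := hC w
    have h1 : ‖w‖ ^ 2 = (inner ℝ (Smap A x) w : ℝ) := by
      rw [hx, real_inner_self_eq_norm_sq]
    have h2 : (inner ℝ (Smap A x) w : ℝ) = (inner ℝ x (Sstar A w) : ℝ) := by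
      rw [Sstar_eq_adjoint, adjoint_inner_right]
    have h3 : (inner ℝ x (Sstar A w) : ℝ) ≤ ‖x‖ * ‖Sstar A w‖ := real_inner_le_norm _ _
    have h4 : ‖x‖ * ‖Sstar A w‖ ≤ C * ‖w‖ * ‖Sstar A w‖ :=
      mul_le_mul_of_nonneg_right hxn (norm_nonneg _)
    have h5 : ‖w‖ ^ 2 ≤ C * ‖w‖ * ‖Sstar A w‖ := by
      rw [h1, h2]; exact h3.trans h4
    rcases eq_or_lt_of_le (norm_nonneg w) with h | h
    · rw [← h]; positivity
    · nlinarith [h5]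
  refine ⟨1 / C ^ 2, by positivity, fun u v => ?_⟩
  set w : WithLp 2 (H × H) := (WithLp.equiv 2 (H × H)).symm (u, v) with hw
  have hwf : w.fst = u := rfl
  have hws : w.snd = v := rfl
  have h1 : ‖w‖ ^ 2 = ‖u‖ ^ 2 + ‖v‖ ^ 2 := by rw [norm_sq_withLp, hwf, hws]
  have h2 : ‖Sstar A w‖ ^ 2 = ‖u + adjoint A v‖ ^ 2 + ‖v - adjoint A u‖ ^ 2 := by
    rw [norm_sq_withLp, Sstar_fst, Sstar_snd, hwf, hws]
  have := key w
  have h6 : ‖w‖ ^ 2 ≤ C ^ 2 * ‖Sstar A w‖ ^ 2 := by nlinarith [norm_nonneg w, norm_nonneg (Sstar A w)]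
  rw [h2] at h6
  rw [div_mul_eq_mul_div, one_mul, div_le_iff₀ (by positivity : (0:ℝ) < C ^ 2)]
  nlinarith [h6]

lemma surjective_of_adjBddBelow (A : H →L[ℝ] H) (hb : AdjBddBelow A) :
    Surjective (fun p : H × H => (p.1 - A p.2, A p.1 + p.2)) := by
  obtain ⟨δ, hδ, hbb⟩ := hb
  -- the bilinear form
  set Bb : WithLp 2 (H × H) →L[ℝ] WithLp 2 (H × H) →L[ℝ] ℝ :=
    (innerSL ℝ).comp ((Smap A).comp (Sstar A)) with hBb
  have hBapp : ∀ v w : WithLp 2 (H × H), Bb v w = (inner ℝ (Smap A (Sstar A v)) w : ℝ) := fun v w => rfl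
  have hnormS : ∀ v : WithLp 2 (H × H), (inner ℝ (Smap A (Sstar A v)) v : ℝ) = ‖Sstar A v‖ ^ 2 := by
    intro v
    rw [← adjoint_inner_right, ← Sstar_eq_adjoint, real_inner_self_eq_norm_sq]
  have hcoer : IsCoercive Bb := by
    refine ⟨δ, hδ, fun v => ?_⟩
    rw [hBapp, hnormS]
    have h2 : ‖Sstar A v‖ ^ 2 = ‖v.fst + adjoint A v.snd‖ ^ 2 + ‖v.snd - adjoint A v.fst‖ ^ 2 := by
      rw [norm_sq_withLp, Sstar_fst, Sstar_snd]
    have h1 : ‖v‖ ^ 2 = ‖v.fst‖ ^ 2 + ‖v.snd‖ ^ 2 := norm_sq_withLp v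
    have := hbb v.fst v.snd
    nlinarith [this]
  have hsurj := hcoer.range_eq_top
  refine (surjective_Smap_iff A).1 ?_
  intro yE
  obtain ⟨v, hv⟩ := LinearMap.range_eq_top.mp hsurj yE
  have hunique : Smap A (Sstar A v) = InnerProductSpace.continuousLinearMapOfBilin Bb v :=
    InnerProductSpace.unique_continuousLinearMapOfBilin Bb (fun w => (hBapp v w).symm)
  exact ⟨Sstar A v, by rw [hunique]; exact hv⟩


section Frames

lemma IsFrame.summable_sq {f : ℕ → H} (hf : IsFrame f) (x : H) :
    Summable fun n => (inner ℝ x (f n) : ℝ) ^ 2 := by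
  obtain ⟨c, C, hc, _, hle⟩ := hf
  by_cases hx : x = 0
  · subst hx
    simpa using summable_zero
  · by_contra h
    have h0 : ∑' n, (inner ℝ x (f n) : ℝ) ^ 2 = 0 := tsum_eq_zero_of_not_summable h
    have h1 := (hle x).1
    rw [h0] at h1
    have hx' : 0 < ‖x‖ := norm_pos_iff.mpr hx
    nlinarith [mul_pos hc (pow_pos hx' 2)]

lemma rebricked_tsum_eq (A : H →L[ℝ] H) {f : ℕ → H} (hf : IsFrame f) (u v : H) :
    ∑' n, (((inner ℝ u (f n) : ℝ) + (inner ℝ v (A (f n)) : ℝ)) ^ 2 +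
      ((inner ℝ v (f n) : ℝ) - (inner ℝ u (A (f n)) : ℝ)) ^ 2) =
    (∑' n, (inner ℝ (u + adjoint A v) (f n) : ℝ) ^ 2) +
      ∑' n, (inner ℝ (v - adjoint A u) (f n) : ℝ) ^ 2 := by
  have ha : ∀ n : ℕ, (inner ℝ (u + adjoint A v) (f n) : ℝ)
      = (inner ℝ u (f n) : ℝ) + (inner ℝ v (A (f n)) : ℝ) := by
    intro n; rw [inner_add_left, adjoint_inner_left]
  have hb : ∀ n : ℕ, (inner ℝ (v - adjoint A u) (f n) : ℝ)
      = (inner ℝ v (f n) : ℝ) - (inner ℝ u (A (f n)) : ℝ) := by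
    intro n; rw [inner_sub_left, adjoint_inner_left]
  rw [← Summable.tsum_add (hf.summable_sq _) (hf.summable_sq _)]
  exact tsum_congr fun n => by rw [ha n, hb n]

lemma lstar_norm_bound (A : H →L[ℝ] H) (u v : H) :
    ‖u + adjoint A v‖ ^ 2 + ‖v - adjoint A u‖ ^ 2
      ≤ (2 * (1 + ‖adjoint A‖) ^ 2) * (‖u‖ ^ 2 + ‖v‖ ^ 2) := by
  have h1 : ‖u + adjoint A v‖ ≤ ‖u‖ + ‖adjoint A‖ * ‖v‖ :=
    (norm_add_le _ _).trans (by gcongr; exact (adjoint A).le_opNorm v)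
  have h2 : ‖v - adjoint A u‖ ≤ ‖v‖ + ‖adjoint A‖ * ‖u‖ :=
    (norm_sub_le _ _).trans (by gcongr; exact (adjoint A).le_opNorm u)
  have hA : 0 ≤ ‖adjoint A‖ := norm_nonneg _
  have h1' := pow_le_pow_left₀ (norm_nonneg _) h1 2
  have h2' := pow_le_pow_left₀ (norm_nonneg _) h2 2
  nlinarith [sq_nonneg (‖u‖ - ‖v‖), mul_nonneg hA (sq_nonneg (‖u‖ - ‖v‖)),
    norm_nonneg u, norm_nonneg v]

lemma adjBddBelow_of_rebricked (A : H →L[ℝ] H) {f : ℕ → H} (hf : IsFrame f)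
    (hr : RebrickedIsFrame A f) : AdjBddBelow A := by
  obtain ⟨c, C, hc, hcC, hfr⟩ := hf
  obtain ⟨c', C', hc', _, hre⟩ := hr
  have hC : 0 < C := hc.trans_le hcC
  refine ⟨c' / C, by positivity, fun u v => ?_⟩
  have h1 := (hre u v).1
  rw [rebricked_tsum_eq A ⟨c, C, hc, hcC, hfr⟩ u v] at h1
  have h2 := (hfr (u + adjoint A v)).2
  have h3 := (hfr (v - adjoint A u)).2
  rw [div_mul_eq_mul_div, div_le_iff₀ hC]
  nlinarith

lemma rebricked_of_adjBddBelow (A : H →L[ℝ] H) (hb : AdjBddBelow A) {f : ℕ → H}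
    (hf : IsFrame f) : RebrickedIsFrame A f := by
  obtain ⟨δ, hδ, hbb⟩ := hb
  obtain ⟨c, C, hc, hcC, hfr⟩ := hf
  have hC : 0 < C := hc.trans_le hcC
  set K : ℝ := 2 * (1 + ‖adjoint A‖) ^ 2 with hK
  have hKpos : 0 < K := by positivity
  refine ⟨c * δ, max (c * δ) (C * K), by positivity, le_max_left _ _, fun u v => ?_⟩
  rw [rebricked_tsum_eq A ⟨c, C, hc, hcC, hfr⟩ u v]
  have h2 := hfr (u + adjoint A v)
  have h3 := hfr (v - adjoint A u)
  have hb1 := hbb u v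
  have hub := lstar_norm_bound A u v
  rw [← hK] at hub
  constructor
  · nlinarith [h2.1, h3.1, mul_le_mul_of_nonneg_left hb1 hc.le]
  · have hstep : (∑' n, (inner ℝ (u + adjoint A v) (f n) : ℝ) ^ 2) +
        (∑' n, (inner ℝ (v - adjoint A u) (f n) : ℝ) ^ 2) ≤ C * K * (‖u‖ ^ 2 + ‖v‖ ^ 2) := by
      nlinarith [h2.2, h3.2, mul_le_mul_of_nonneg_left hub hC.le, hK]
    refine hstep.trans ?_
    have hX : (0:ℝ) ≤ ‖u‖ ^ 2 + ‖v‖ ^ 2 := by positivity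
    exact mul_le_mul_of_nonneg_right (le_max_right _ _) hX

lemma exists_isFrame [TopologicalSpace.SeparableSpace H]
    (hH : ¬ FiniteDimensional ℝ H) : ∃ f : ℕ → H, IsFrame f := by
  obtain ⟨w, b, hb⟩ := exists_hilbertBasis ℝ H
  have horth := b.orthonormal
  -- distinct basis vectors are far apart
  have hdist : ∀ x y : w, x ≠ y → (1 : ℝ) ≤ dist (x : H) (y : H) := by
    intro x y hxy
    have hx1 : ‖(x : H)‖ = 1 := by have := horth.1 x; rwa [hb] at this
    have hxy0 : (inner ℝ (x : H) ((y : H)) : ℝ) = 0 := by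
      have := horth.2 hxy; rwa [hb] at this
    have hy1 : ‖(y : H)‖ = 1 := by have := horth.1 y; rwa [hb] at this
    have h1 : ‖(x : H) - (y : H)‖ ^ 2 = 2 := by
      rw [norm_sub_sq_real, hx1, hy1, hxy0]; norm_num
    have h2 : (1 : ℝ) ≤ ‖(x : H) - (y : H)‖ := by
      nlinarith [norm_nonneg ((x : H) - (y : H))]
    rwa [dist_eq_norm]
  -- w is countable
  have hwc : Countable w := by
    obtain ⟨D, hDc, hDd⟩ := TopologicalSpace.exists_countable_dense H
    choose d hd hlt using fun x : w =>
      Metric.dense_iff.mp hDd (x : H) (1/2) (by norm_num)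
    have hinj : Function.Injective fun x : w => (⟨d x, hlt x⟩ : D) := by
      intro x y hxy'
      by_contra hne
      have h1 := hdist x y hne
      have hdd : d x = d y := congrArg Subtype.val hxy'
      have hx2 : dist (d x) (x : H) < 1/2 := Metric.mem_ball.mp (hd x)
      have hy2 : dist (d y) (y : H) < 1/2 := Metric.mem_ball.mp (hd y)
      have h2 : dist (x : H) (y : H) < 1 := by
        calc dist (x : H) (y : H) ≤ dist (x : H) (d x) + dist (d y) (y : H) := by
              rw [hdd]; exact dist_triangle _ _ _
          _ < 1/2 + 1/2 := by
              rw [dist_comm (x : H) (d x)]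
              exact add_lt_add hx2 hy2
          _ = 1 := by norm_num
      linarith
    have : Countable D := hDc.to_subtype
    exact hinj.countable
  -- w is infinite
  have hwi : Infinite w := by
    by_contra hfin
    rw [not_infinite_iff_finite] at hfin
    have hrange : (Set.range ⇑b).Finite := by
      rw [hb, Subtype.range_coe]
      exact Set.finite_coe_iff.mp hfin
    have hfd : FiniteDimensional ℝ (Submodule.span ℝ (Set.range ⇑b)) :=
      FiniteDimensional.span_of_finite ℝ hrange
    have hclosed : IsClosed ((Submodule.span ℝ (Set.range ⇑b) : Submodule ℝ H) : Set H) :=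
      Submodule.closed_of_finiteDimensional _
    have htop := b.dense_span
    rw [hclosed.submodule_topologicalClosure_eq] at htop
    rw [htop] at hfd
    exact hH (Submodule.topEquiv.finiteDimensional)
  obtain ⟨den⟩ := nonempty_denumerable w
  letI := den
  let g : ℕ ≃ w := (Denumerable.eqv w).symm
  refine ⟨fun n => ((g n : w) : H), 1, 1, one_pos, le_refl 1, fun x => ?_⟩
  have hsum : ∑' n, (inner ℝ x (((g n : w) : H)) : ℝ) ^ 2 = ‖x‖ ^ 2 := by
    calc ∑' n, (inner ℝ x (((g n : w) : H)) : ℝ) ^ 2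
        = ∑' i : w, (inner ℝ x ((i : H)) : ℝ) ^ 2 :=
          g.tsum_eq fun i : w => (inner ℝ x ((i : H)) : ℝ) ^ 2
      _ = ∑' i : w, (inner ℝ x (b i) : ℝ) * (inner ℝ (b i) x : ℝ) := by
          refine tsum_congr fun i => ?_
          rw [hb, real_inner_comm ((i : H)) x]
          ring
      _ = (inner ℝ x x : ℝ) := b.tsum_inner_mul_inner x x
      _ = ‖x‖ ^ 2 := real_inner_self_eq_norm_sq x
  simp only [one_mul]
  exact ⟨le_of_eq hsum.symm, le_of_eq hsum⟩

end Frames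

end FrameAux


theorem stmt18 (H : Type*) [NormedAddCommGroup H] [InnerProductSpace ℝ H]
    [CompleteSpace H] [TopologicalSpace.SeparableSpace H]
    (hH : ¬ FiniteDimensional ℝ H) (A : H →L[ℝ] H) :
    List.TFAE
      [∀ f : ℕ → H, IsFrame f → RebrickedIsFrame A f,
       ∃ f : ℕ → H, IsFrame f ∧ RebrickedIsFrame A f,
       Function.Surjective (fun p : H × H => (p.1 - A p.2, A p.1 + p.2))] := by
  tfae_have 1 → 2
  | h => by
    obtain ⟨f, hf⟩ := exists_isFrame hH
    exact ⟨f, hf, h f hf⟩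
  tfae_have 2 → 3
  | ⟨f, hf, hr⟩ => surjective_of_adjBddBelow A (adjBddBelow_of_rebricked A hf hr)
  tfae_have 3 → 1
  | h => fun f hf => rebricked_of_adjBddBelow A (adjBddBelow_of_surjective A h) hf
  tfae_finish
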